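/- arXiv:2109.11142 — 2 statements merged into one kernel-verified Lean document; each statement's English description precedes it below -/
import Mathlib

section
/- For any fixed data matrix X ∈ ℝ^{n×p}, any λ ≥ 0 and M > 0, the function z ↦ F₁(z) is convex on the cube [0,1]^p. -/
open Matrix Finset Real

noncomputable section

/-- The value `F₁(z)`: the optimal value of the perspective-formulation convex
program with continuous variables `β, W, q` (the residuals `ξ_{:,j} = X_{:,j} −
X_{−j} β_{:,j}` have been substituted into the objective; `β_{i,i} = 0` makes
`X_{−j} β_{:,j} = Σ_{i≠j} β_{i,j} X_{:,i}`). -/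
def F1 {n p : ℕ} (X : Matrix (Fin n) (Fin p) ℝ) (lam M : ℝ) (z : Fin p → ℝ) : ℝ :=
  sInf {c : ℝ | ∃ β W q : Matrix (Fin p) (Fin p) ℝ,
    (∀ i j, 0 ≤ q i j) ∧ (∀ i j, (β i j) ^ 2 ≤ q i j * z j) ∧
    (∀ i j, |β i j| ≤ M * W i j) ∧ (∀ i j, W i j ≤ z i) ∧ (∀ i j, W i j ≤ z j) ∧
    (∀ i, β i i = 0) ∧
    c = (1 / 2) * (∑ j, ∑ k, (X k j - ∑ i ∈ Finset.univ.erase j, β i j * X k i) ^ 2)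
        + lam * ∑ j, ∑ i ∈ Finset.univ.erase j, q i j}

/-- Scalar fact: `2·bx·by' ≤ qx·y + qy·x` under the perspective constraints. -/
lemma persp_key' {x y qx qy bx by' : ℝ} (hx : 0 ≤ x) (hy : 0 ≤ y)
    (hqx : 0 ≤ qx) (hqy : 0 ≤ qy)
    (h1 : bx ^ 2 ≤ qx * x) (h2 : by' ^ 2 ≤ qy * y) :
    2 * (bx * by') ≤ qx * y + qy * x := by
  nlinarith [sq_nonneg (qx*y - qy*x), mul_le_mul h1 h2 (sq_nonneg by') (mul_nonneg hqx hx),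
    sq_nonneg (bx*by'), mul_nonneg (mul_nonneg hqx hy) (mul_nonneg hqy hx),
    mul_nonneg hqx hy, mul_nonneg hqy hx, sq_nonneg (qx*y + qy*x - 2*(bx*by')),
    sq_nonneg (qx*y + qy*x)]

/-- Joint convexity of the rotated second-order cone `{(β,q,z) : β² ≤ q·z, q,z ≥ 0}`. -/
lemma persp' {a b x y qx qy bx by' : ℝ} (ha : 0 ≤ a) (hb : 0 ≤ b)
    (hx : 0 ≤ x) (hy : 0 ≤ y) (hqx : 0 ≤ qx) (hqy : 0 ≤ qy)
    (h1 : bx ^ 2 ≤ qx * x) (h2 : by' ^ 2 ≤ qy * y) :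
    (a * bx + b * by') ^ 2 ≤ (a * qx + b * qy) * (a * x + b * y) := by
  have key := persp_key' hx hy hqx hqy h1 h2
  nlinarith [mul_nonneg (mul_nonneg ha hb) (sub_nonneg.mpr key),
    mul_nonneg (mul_nonneg ha ha) (sub_nonneg.mpr h1),
    mul_nonneg (mul_nonneg hb hb) (sub_nonneg.mpr h2)]

lemma aux_inf' {a C : ℝ} {s : Set ℝ} (ha : 0 ≤ a) (hne : s.Nonempty)
    (h : ∀ c ∈ s, C ≤ a * c) : C ≤ a * sInf s := by
  rcases ha.eq_or_lt with rfl | hpos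
  · obtain ⟨c, hc⟩ := hne; simpa using h c hc
  · have : C / a ≤ sInf s := le_csInf hne fun c hc => by
      rw [div_le_iff₀ hpos]; linarith [h c hc, mul_comm a c]
    calc C = a * (C / a) := by field_simp
    _ ≤ a * sInf s := mul_le_mul_of_nonneg_left this ha

/-- The feasible-value set of the convex program defining `F₁`. -/
def feasSet {n p : ℕ} (X : Matrix (Fin n) (Fin p) ℝ) (lam M : ℝ) (z : Fin p → ℝ) : Set ℝ :=
  {c : ℝ | ∃ β W q : Matrix (Fin p) (Fin p) ℝ,
    (∀ i j, 0 ≤ q i j) ∧ (∀ i j, (β i j) ^ 2 ≤ q i j * z j) ∧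
    (∀ i j, |β i j| ≤ M * W i j) ∧ (∀ i j, W i j ≤ z i) ∧ (∀ i j, W i j ≤ z j) ∧
    (∀ i, β i i = 0) ∧
    c = (1 / 2) * (∑ j, ∑ k, (X k j - ∑ i ∈ Finset.univ.erase j, β i j * X k i) ^ 2)
        + lam * ∑ j, ∑ i ∈ Finset.univ.erase j, q i j}

lemma feasSet_nonempty {n p : ℕ} (X : Matrix (Fin n) (Fin p) ℝ) (lam M : ℝ)
    {z : Fin p → ℝ} (hz : ∀ i, 0 ≤ z i) : (feasSet X lam M z).Nonempty := by
  refine ⟨(1 / 2) * (∑ j : Fin p, ∑ k : Fin n,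
        (X k j - ∑ i ∈ Finset.univ.erase j, (0:ℝ) * X k i) ^ 2)
        + lam * ∑ j : Fin p, ∑ i ∈ Finset.univ.erase j, (0:ℝ),
    (0 : Matrix (Fin p) (Fin p) ℝ), (0 : Matrix (Fin p) (Fin p) ℝ),
    (0 : Matrix (Fin p) (Fin p) ℝ), ?_⟩
  refine ⟨fun i j => le_refl _, fun i j => by simp, fun i j => by simp,
    fun i j => by simpa using hz i, fun i j => by simpa using hz j, fun i => rfl, ?_⟩
  simp [Matrix.zero_apply]

lemma feasSet_bddBelow {n p : ℕ} (X : Matrix (Fin n) (Fin p) ℝ) {lam : ℝ} (M : ℝ)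
    (hlam : 0 ≤ lam) (z : Fin p → ℝ) : BddBelow (feasSet X lam M z) := by
  refine ⟨0, fun c hc => ?_⟩
  obtain ⟨β, W, q, hq, _, _, _, _, _, hc⟩ := hc
  rw [hc]
  have h1 : (0:ℝ) ≤ ∑ j, ∑ k, (X k j - ∑ i ∈ Finset.univ.erase j, β i j * X k i) ^ 2 :=
    Finset.sum_nonneg fun j _ => Finset.sum_nonneg fun k _ => sq_nonneg _
  have h2 : (0:ℝ) ≤ ∑ j, ∑ i ∈ Finset.univ.erase j, q i j :=
    Finset.sum_nonneg fun j _ => Finset.sum_nonneg fun i _ => hq i j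
  positivity

/-- Convex combinations of feasible points for `z₁`, `z₂` give a feasible point
for the convex combination of `z₁` and `z₂`, with value at most the combination
of the two values. -/
lemma feas_comb {n p : ℕ} (X : Matrix (Fin n) (Fin p) ℝ) {lam : ℝ} (M : ℝ)
    {z₁ z₂ : Fin p → ℝ} (hz₁ : ∀ i, 0 ≤ z₁ i) (hz₂ : ∀ i, 0 ≤ z₂ i)
    {a b : ℝ} (ha : 0 ≤ a) (hb : 0 ≤ b) (hab : a + b = 1)
    {c₁ c₂ : ℝ} (hc₁ : c₁ ∈ feasSet X lam M z₁) (hc₂ : c₂ ∈ feasSet X lam M z₂) :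
    ∃ c ∈ feasSet X lam M (fun i => a * z₁ i + b * z₂ i), c ≤ a * c₁ + b * c₂ := by
  obtain ⟨β₁, W₁, q₁, hq₁, hp₁, habs₁, hWi₁, hWj₁, hd₁, he₁⟩ := hc₁
  obtain ⟨β₂, W₂, q₂, hq₂, hp₂, habs₂, hWi₂, hWj₂, hd₂, he₂⟩ := hc₂
  set β : Matrix (Fin p) (Fin p) ℝ := a • β₁ + b • β₂ with hβ
  set W : Matrix (Fin p) (Fin p) ℝ := a • W₁ + b • W₂ with hW
  set q : Matrix (Fin p) (Fin p) ℝ := a • q₁ + b • q₂ with hq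
  have hβa : ∀ i j, β i j = a * β₁ i j + b * β₂ i j := fun i j => by
    simp [hβ, Matrix.add_apply, Matrix.smul_apply, smul_eq_mul]
  have hWa : ∀ i j, W i j = a * W₁ i j + b * W₂ i j := fun i j => by
    simp [hW, Matrix.add_apply, Matrix.smul_apply, smul_eq_mul]
  have hqa : ∀ i j, q i j = a * q₁ i j + b * q₂ i j := fun i j => by
    simp [hq, Matrix.add_apply, Matrix.smul_apply, smul_eq_mul]
  refine ⟨(1 / 2) * (∑ j : Fin p, ∑ k : Fin n,
      (X k j - ∑ i ∈ Finset.univ.erase j, β i j * X k i) ^ 2)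
      + lam * ∑ j : Fin p, ∑ i ∈ Finset.univ.erase j, q i j,
    ⟨β, W, q, ?_, ?_, ?_, ?_, ?_, ?_, rfl⟩, ?_⟩
  · intro i j; rw [hqa]
    exact add_nonneg (mul_nonneg ha (hq₁ i j)) (mul_nonneg hb (hq₂ i j))
  · intro i j; rw [hβa, hqa]
    exact persp' ha hb (hz₁ j) (hz₂ j) (hq₁ i j) (hq₂ i j) (hp₁ i j) (hp₂ i j)
  · intro i j; rw [hβa, hWa]
    calc |a * β₁ i j + b * β₂ i j| ≤ |a * β₁ i j| + |b * β₂ i j| := abs_add_le _ _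
    _ = a * |β₁ i j| + b * |β₂ i j| := by
        rw [abs_mul, abs_mul, abs_of_nonneg ha, abs_of_nonneg hb]
    _ ≤ a * (M * W₁ i j) + b * (M * W₂ i j) :=
        add_le_add (mul_le_mul_of_nonneg_left (habs₁ i j) ha)
          (mul_le_mul_of_nonneg_left (habs₂ i j) hb)
    _ = M * (a * W₁ i j + b * W₂ i j) := by ring
  · intro i j; rw [hWa]
    exact add_le_add (mul_le_mul_of_nonneg_left (hWi₁ i j) ha)
      (mul_le_mul_of_nonneg_left (hWi₂ i j) hb)
  · intro i j; rw [hWa]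
    exact add_le_add (mul_le_mul_of_nonneg_left (hWj₁ i j) ha)
      (mul_le_mul_of_nonneg_left (hWj₂ i j) hb)
  · intro i; rw [hβa, hd₁, hd₂]; ring
  · have hres : ∀ (j : Fin p) (k : Fin n),
        X k j - ∑ i ∈ Finset.univ.erase j, β i j * X k i
        = a * (X k j - ∑ i ∈ Finset.univ.erase j, β₁ i j * X k i)
          + b * (X k j - ∑ i ∈ Finset.univ.erase j, β₂ i j * X k i) := by
      intro j k
      have : ∑ i ∈ Finset.univ.erase j, β i j * X k i
          = a * (∑ i ∈ Finset.univ.erase j, β₁ i j * X k i)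
            + b * (∑ i ∈ Finset.univ.erase j, β₂ i j * X k i) := by
        rw [Finset.mul_sum, Finset.mul_sum, ← Finset.sum_add_distrib]
        refine Finset.sum_congr rfl fun i _ => by rw [hβa]; ring
      rw [this]; linear_combination (-(X k j)) * hab
    have hsq : ∑ j : Fin p, ∑ k : Fin n,
        (X k j - ∑ i ∈ Finset.univ.erase j, β i j * X k i) ^ 2
        ≤ a * (∑ j : Fin p, ∑ k : Fin n,
            (X k j - ∑ i ∈ Finset.univ.erase j, β₁ i j * X k i) ^ 2)
          + b * (∑ j : Fin p, ∑ k : Fin n,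
            (X k j - ∑ i ∈ Finset.univ.erase j, β₂ i j * X k i) ^ 2) := by
      rw [Finset.mul_sum, Finset.mul_sum, ← Finset.sum_add_distrib]
      refine Finset.sum_le_sum fun j _ => ?_
      rw [Finset.mul_sum, Finset.mul_sum, ← Finset.sum_add_distrib]
      refine Finset.sum_le_sum fun k _ => ?_
      rw [hres j k]
      set r₁ := X k j - ∑ i ∈ Finset.univ.erase j, β₁ i j * X k i
      set r₂ := X k j - ∑ i ∈ Finset.univ.erase j, β₂ i j * X k i
      nlinarith [sq_nonneg (r₁ - r₂), mul_nonneg ha hb]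
    have hlamq : ∑ j : Fin p, ∑ i ∈ Finset.univ.erase j, q i j
        = a * (∑ j : Fin p, ∑ i ∈ Finset.univ.erase j, q₁ i j)
          + b * (∑ j : Fin p, ∑ i ∈ Finset.univ.erase j, q₂ i j) := by
      rw [Finset.mul_sum, Finset.mul_sum, ← Finset.sum_add_distrib]
      refine Finset.sum_congr rfl fun j _ => ?_
      rw [Finset.mul_sum, Finset.mul_sum, ← Finset.sum_add_distrib]
      exact Finset.sum_congr rfl fun i _ => by rw [hqa]
    rw [he₁, he₂, hlamq]
    nlinarith [mul_le_mul_of_nonneg_left hsq (by norm_num : (0:ℝ) ≤ 1/2)]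

/-- **Proposition (convexity).** For any data matrix `X`, any `λ ≥ 0` and `M > 0`,
the function `z ↦ F₁(z)` is convex on the cube `[0,1]^p`. -/
theorem stmt7 (n p : ℕ) (X : Matrix (Fin n) (Fin p) ℝ) (lam M : ℝ)
    (hlam : 0 ≤ lam) (hM : 0 < M) :
    ConvexOn ℝ {z : Fin p → ℝ | ∀ i, z i ∈ Set.Icc (0 : ℝ) 1} (F1 X lam M) := by
  have hF : ∀ z : Fin p → ℝ, F1 X lam M z = sInf (feasSet X lam M z) := fun z => rfl
  constructor
  · intro u hu v hv a b ha hb hab i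
    have := (convex_Icc (0:ℝ) 1) (hu i) (hv i) ha hb hab
    simpa using this
  · intro u hu v hv a b ha hb hab
    have hu0 : ∀ i, 0 ≤ u i := fun i => (hu i).1
    have hv0 : ∀ i, 0 ≤ v i := fun i => (hv i).1
    have hz : a • u + b • v = fun i => a * u i + b * v i := by
      funext i; simp [Pi.add_apply, smul_eq_mul]
    simp only [smul_eq_mul]
    rw [hF, hF, hF, hz]
    set T := sInf (feasSet X lam M (fun i => a * u i + b * v i)) with hT
    have key : ∀ c₁ ∈ feasSet X lam M u, ∀ c₂ ∈ feasSet X lam M v,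
        T ≤ a * c₁ + b * c₂ := by
      intro c₁ hc₁ c₂ hc₂
      obtain ⟨c, hc, hle⟩ := feas_comb X M hu0 hv0 ha hb hab hc₁ hc₂
      exact le_trans (csInf_le (feasSet_bddBelow X M hlam _) hc) hle
    have step2 : ∀ c₂ ∈ feasSet X lam M v,
        T ≤ a * sInf (feasSet X lam M u) + b * c₂ := by
      intro c₂ hc₂
      have := aux_inf' (C := T - b * c₂) ha (feasSet_nonempty X lam M hu0)
        (fun c₁ hc₁ => by linarith [key c₁ hc₁ c₂ hc₂])
      linarith
    have := aux_inf' (C := T - a * sInf (feasSet X lam M u)) hb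
      (feasSet_nonempty X lam M hv0) (fun c₂ hc₂ => by linarith [step2 c₂ hc₂])
    linarith

end
end

section
/- Fix z ∈ {0,1}^p. For each j ∈ [p] define β̄_{:,j} ∈ ℝ^p as follows: if z_j = 1, β̄_{:,j} is a minimizer of (1/2)‖X_{:,j} − X_{−j} β_{:,j}‖₂² + λ Σ_{i≠j} β_{i,j}² subject to |β_{i,j}| ≤ M z_i for all i and β_{j,j} = 0; if z_j = 0, β̄_{:,j} = 0. Define α ∈ ℝ^{n×p} by α_{:,j} = X_{:,j} − X_{−j} β̄_{:,j} if z_j = 1 and α_{:,j} = X_{:,j} if z_j = 0. Define Γ⁽¹⁾, Γ⁽²⁾ ∈ ℝ^{p×p} by: Γ⁽¹⁾_{i,j} = M|(X_{−j}ᵀα_{:,j})_i − 2λβ̄_{i,j}|/2 if z_i = z_j = 1, = M|(X_{−j}ᵀα_{:,j})_i|/2 if z_i = z_j = 0, = 0 if z_i = 1 and z_j = 0, = M|(X_{−j}ᵀα_{:,j})_i| if z_i = 0 and z_j = 1; and Γ⁽²⁾_{i,j} = M|(X_{−j}ᵀα_{:,j})_i − 2λβ̄_{i,j}|/2 if z_i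 = z_j = 1, = M|(X_{−j}ᵀα_{:,j})_i|/2 if z_i = z_j = 0, = M|(X_{−j}ᵀα_{:,j})_i| if z_i = 1 and z_j = 0, = 0 if z_i = 0 and z_j = 1. Then the vector g ∈ ℝ^p with coordinates g_i = −Σ_{j=1}^p ( Γ⁽¹⁾_{i,j} + Γ⁽²⁾_{j,i} + λ β̄_{j,i}² ) is a subgradient of the convex function F₁ : [0,1]^p → ℝ at the point z. -/
open Matrix Finset Real

noncomputable section

/-- The `j`-th restricted ridge-regression objective
`(1/2)‖X_{:,j} − X_{−j} b‖₂² + λ Σ_{i≠j} b_i²` (with `b_j = 0`). -/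
def colObj {n p : ℕ} (X : Matrix (Fin n) (Fin p) ℝ) (lam : ℝ) (j : Fin p)
    (b : Fin p → ℝ) : ℝ :=
  (1 / 2) * (∑ k, (X k j - ∑ i ∈ Finset.univ.erase j, b i * X k i) ^ 2)
    + lam * ∑ i ∈ Finset.univ.erase j, (b i) ^ 2

lemma eps_le_zero (a K : ℝ) (hK : 0 ≤ K)
    (h : ∀ s : ℝ, 0 < s → s ≤ 1 → a ≤ s * K) : a ≤ 0 := by
  by_contra hc
  push_neg at hc
  have hK1 : a ≤ K := by simpa using h 1 one_pos le_rfl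
  have hKpos : 0 < K := lt_of_lt_of_le hc hK1
  have h2 := h (a / (2 * K)) (by positivity) (by rw [div_le_one (by positivity)]; nlinarith)
  have he : a / (2 * K) * K = a / 2 := by field_simp
  rw [he] at h2
  linarith

lemma persp (lam q x zj b bb : ℝ) (hlam : 0 ≤ lam) (hq : 0 ≤ q) (hbq : b^2 ≤ q * x)
    (hx0 : 0 ≤ x) (hz : zj = 0 ∨ zj = 1) (hz0 : zj = 0 → bb = 0) :
    lam * bb^2 + 2*lam*bb*(b - bb) - lam*bb^2*(x - zj) ≤ lam * q := by
  rcases hz with h|h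
  · rw [hz0 h]; ring_nf; positivity
  · rw [h]
    rcases eq_or_lt_of_le hx0 with hx|hx
    · have hb : b = 0 := by nlinarith [sq_nonneg b]
      rw [hb, ← hx]; nlinarith [mul_nonneg hlam hq]
    · have key : x * (lam * bb^2 + 2*lam*bb*(b - bb) - lam*bb^2*(x - 1)) ≤ x * (lam * q) := by
        nlinarith [mul_nonneg hlam (sq_nonneg (b - bb*x)), mul_le_mul_of_nonneg_left hbq hlam]
      exact (mul_le_mul_iff_right₀ hx).mp key

lemma colObj_update {n p : ℕ} (X : Matrix (Fin n) (Fin p) ℝ) (lam : ℝ) (j i : Fin p)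
    (hij : i ≠ j) (b : Fin p → ℝ) (t : ℝ) :
    colObj X lam j (Function.update b i t)
      = colObj X lam j b
        - (t - b i) * (∑ k, X k i * (X k j - ∑ i' ∈ Finset.univ.erase j, b i' * X k i'))
        + (t - b i) ^ 2 * ((1/2) * ∑ k, (X k i) ^ 2 + lam)
        + 2 * lam * (b i) * (t - b i) := by
  have hi : i ∈ Finset.univ.erase j := Finset.mem_erase.2 ⟨hij, Finset.mem_univ i⟩
  have hupd : ∀ i', Function.update b i t i' = b i' + (if i' = i then t - b i else 0) := by
    intro i'
    by_cases h : i' = i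
    · subst h; simp
    · simp [Function.update_of_ne h, h]
  have hsum : ∀ k, ∑ i' ∈ Finset.univ.erase j, Function.update b i t i' * X k i'
      = (∑ i' ∈ Finset.univ.erase j, b i' * X k i') + (t - b i) * X k i := by
    intro k
    simp_rw [hupd, add_mul, Finset.sum_add_distrib, ite_mul, zero_mul]
    rw [Finset.sum_ite_eq' (Finset.univ.erase j) i (fun i' => (t - b i) * X k i'), if_pos hi]
  have hsq : ∑ i' ∈ Finset.univ.erase j, (Function.update b i t i') ^ 2
      = (∑ i' ∈ Finset.univ.erase j, (b i') ^ 2) + ((t - b i)^2 + 2 * (b i) * (t - b i)) := by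
    have : ∀ i', (Function.update b i t i') ^ 2
        = (b i') ^ 2 + (if i' = i then (t - b i)^2 + 2 * (b i') * (t - b i) else 0) := by
      intro i'
      by_cases h : i' = i
      · subst h; simp [Function.update_self]; ring
      · simp [Function.update_of_ne h, h]
    simp_rw [this, Finset.sum_add_distrib]
    rw [Finset.sum_ite_eq' (Finset.univ.erase j) i
      (fun i' => (t - b i)^2 + 2 * (b i') * (t - b i)), if_pos hi]
  unfold colObj
  rw [hsq]
  have hres : ∀ k, (X k j - ∑ i' ∈ Finset.univ.erase j, Function.update b i t i' * X k i') ^ 2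
      = (X k j - ∑ i' ∈ Finset.univ.erase j, b i' * X k i') ^ 2
        - (2 * (t - b i)) * (X k i * (X k j - ∑ i' ∈ Finset.univ.erase j, b i' * X k i'))
        + (t - b i)^2 * (X k i)^2 := by
    intro k; rw [hsum k]; ring
  simp_rw [hres, Finset.sum_add_distrib, Finset.sum_sub_distrib, ← Finset.mul_sum]
  ring

lemma quad_lb {n p : ℕ} (X : Matrix (Fin n) (Fin p) ℝ) (j : Fin p) (b bb : Fin p → ℝ) :
    (1/2) * (∑ k, (X k j - ∑ i ∈ Finset.univ.erase j, bb i * X k i)^2)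
      - ∑ i ∈ Finset.univ.erase j, (b i - bb i) *
          (∑ k, X k i * (X k j - ∑ i' ∈ Finset.univ.erase j, bb i' * X k i'))
    ≤ (1/2) * (∑ k, (X k j - ∑ i ∈ Finset.univ.erase j, b i * X k i)^2) := by
  set r : Fin n → ℝ := fun k => X k j - ∑ i ∈ Finset.univ.erase j, bb i * X k i with hr
  set δ : Fin n → ℝ := fun k => ∑ i ∈ Finset.univ.erase j, (b i - bb i) * X k i with hδ
  have h1 : ∀ k, X k j - ∑ i ∈ Finset.univ.erase j, b i * X k i = r k - δ k := by
    intro k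
    have : (∑ i ∈ Finset.univ.erase j, bb i * X k i)
        + (∑ i ∈ Finset.univ.erase j, (b i - bb i) * X k i)
        = ∑ i ∈ Finset.univ.erase j, b i * X k i := by
      rw [← Finset.sum_add_distrib]; exact Finset.sum_congr rfl fun i _ => by ring
    simp only [hr, hδ]; linarith
  have h2 : ∑ i ∈ Finset.univ.erase j, (b i - bb i) * (∑ k, X k i * r k)
      = ∑ k, r k * δ k := by
    simp_rw [Finset.mul_sum, hδ]
    rw [Finset.sum_comm]
    exact Finset.sum_congr rfl fun k _ => by
      rw [Finset.mul_sum]; exact Finset.sum_congr rfl fun i _ => by ring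
  simp only [h1]; rw [h2]
  have h3 : ∀ k, (r k - δ k)^2 = (r k)^2 - 2 * (r k * δ k) + (δ k)^2 := fun k => by ring
  simp_rw [h3, Finset.sum_add_distrib, Finset.sum_sub_distrib, ← Finset.mul_sum]
  have h4 : 0 ≤ ∑ k, (δ k)^2 := Finset.sum_nonneg fun k _ => sq_nonneg _
  linarith

lemma VI {n p : ℕ} (X : Matrix (Fin n) (Fin p) ℝ) (lam M : ℝ) (hlam : 0 ≤ lam)
    (z : Fin p → ℝ) (j i : Fin p) (hij : i ≠ j)
    (bb : Fin p → ℝ) (hbbj : bb j = 0) (hbnd : ∀ i', |bb i'| ≤ M * z i')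
    (hmin : ∀ b : Fin p → ℝ, b j = 0 → (∀ i', |b i'| ≤ M * z i') →
      colObj X lam j bb ≤ colObj X lam j b)
    (t : ℝ) (ht : |t| ≤ M * z i) :
    ((∑ k, X k i * (X k j - ∑ i' ∈ Finset.univ.erase j, bb i' * X k i')) - 2*lam*bb i)
      * (t - bb i) ≤ 0 := by
  set S := ∑ k, X k i * (X k j - ∑ i' ∈ Finset.univ.erase j, bb i' * X k i') with hS
  set u := t - bb i with hu
  set Q := (1/2 : ℝ) * ∑ k, (X k i) ^ 2 + lam with hQ
  have hQ0 : 0 ≤ Q := by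
    have : (0:ℝ) ≤ ∑ k, (X k i) ^ 2 := Finset.sum_nonneg fun k _ => sq_nonneg _
    rw [hQ]; linarith
  apply eps_le_zero _ (u^2 * Q) (by positivity)
  intro s hs hs1
  have hb := hmin (Function.update bb i (bb i + s*u))
    (by rw [Function.update_of_ne (Ne.symm hij)]; exact hbbj)
    (by
      intro i'
      by_cases h : i' = i
      · subst h
        rw [Function.update_self]
        have h1 := abs_le.1 (hbnd i')
        have h2 := abs_le.1 ht
        rw [abs_le]
        constructor <;> nlinarith [h1.1, h1.2, h2.1, h2.2]
      · rw [Function.update_of_ne h]; exact hbnd i')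
  rw [colObj_update X lam j i hij bb (bb i + s*u)] at hb
  rw [show bb i + s*u - bb i = s*u by ring, ← hS, ← hQ] at hb
  have hb' : s * ((S - 2*lam*bb i) * u) ≤ s * (s * (u^2 * Q)) := by nlinarith [hb]
  exact (mul_le_mul_iff_right₀ hs).mp hb'

/-- **Proposition (subgradient).** For binary `z`, with `β̄` the column-wise
minimizers, `α` the residual matrix, and `Γ⁽¹⁾, Γ⁽²⁾` as in the statement, the
vector `g` with `g_i = −Σ_j (Γ⁽¹⁾_{i,j} + Γ⁽²⁾_{j,i} + λ β̄_{j,i}²)` is a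
subgradient of `F₁` at `z` on `[0,1]^p`. -/
theorem stmt8 (n p : ℕ) (X : Matrix (Fin n) (Fin p) ℝ) (lam M : ℝ)
    (hlam : 0 ≤ lam) (hM : 0 < M)
    (z : Fin p → ℝ) (hz : ∀ i, z i = 0 ∨ z i = 1)
    (βbar : Matrix (Fin p) (Fin p) ℝ)
    (hβbar0 : ∀ j, z j = 0 → ∀ i, βbar i j = 0)
    (hβbar1 : ∀ j, z j = 1 →
      βbar j j = 0 ∧ (∀ i, |βbar i j| ≤ M * z i) ∧
      ∀ b : Fin p → ℝ, b j = 0 → (∀ i, |b i| ≤ M * z i) →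
        colObj X lam j (fun i => βbar i j) ≤ colObj X lam j b)
    (α : Matrix (Fin n) (Fin p) ℝ)
    (hα : ∀ k j, α k j =
      if z j = 1 then X k j - ∑ i ∈ Finset.univ.erase j, βbar i j * X k i
      else X k j)
    -- `XtA i j = (X_{−j}ᵀ α_{:,j})_i`
    (XtA : Matrix (Fin p) (Fin p) ℝ)
    (hXtA : ∀ i j, XtA i j = ∑ k, (if i = j then 0 else X k i) * α k j)
    (Γ1 Γ2 : Matrix (Fin p) (Fin p) ℝ)
    (hΓ1 : ∀ i j, Γ1 i j =
      if z i = 1 ∧ z j = 1 then M * |XtA i j - 2 * lam * βbar i j| / 2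
      else if z i = 0 ∧ z j = 0 then M * |XtA i j| / 2
      else if z i = 1 ∧ z j = 0 then 0
      else M * |XtA i j|)
    (hΓ2 : ∀ i j, Γ2 i j =
      if z i = 1 ∧ z j = 1 then M * |XtA i j - 2 * lam * βbar i j| / 2
      else if z i = 0 ∧ z j = 0 then M * |XtA i j| / 2
      else if z i = 1 ∧ z j = 0 then M * |XtA i j|
      else 0)
    (g : Fin p → ℝ)
    (hg : ∀ i, g i = -∑ j, (Γ1 i j + Γ2 j i + lam * (βbar j i) ^ 2)) :
    ∀ x : Fin p → ℝ, (∀ i, x i ∈ Set.Icc (0 : ℝ) 1) →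
      F1 X lam M z + ∑ i, g i * (x i - z i) ≤ F1 X lam M x := by
  intro x hx
  have hx0 : ∀ i, 0 ≤ x i := fun i => (hx i).1
  have hx1 : ∀ i, x i ≤ 1 := fun i => (hx i).2
  have hz0 : ∀ i, (0:ℝ) ≤ z i := fun i => by rcases hz i with h|h <;> rw [h] <;> norm_num
  have hz1 : ∀ i, z i ≤ 1 := fun i => by rcases hz i with h|h <;> rw [h] <;> norm_num
  have hβbdiag : ∀ j, βbar j j = 0 := by
    intro j; rcases hz j with h|h
    · exact hβbar0 j h j
    · exact (hβbar1 j h).1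
  have hβb0r : ∀ i j, z i = 0 → βbar i j = 0 := by
    intro i j h
    rcases hz j with hj|hj
    · exact hβbar0 j hj i
    · have := (hβbar1 j hj).2.1 i
      rw [h, mul_zero] at this
      exact abs_eq_zero.1 (le_antisymm this (abs_nonneg _))
  have hXtAdiag : ∀ j, XtA j j = 0 := by
    intro j; rw [hXtA]; simp
  have hS : ∀ i j, i ≠ j →
      (∑ k, X k i * (X k j - ∑ i' ∈ Finset.univ.erase j, βbar i' j * X k i')) = XtA i j := by
    intro i j hij
    rw [hXtA]
    refine Finset.sum_congr rfl fun k _ => ?_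
    rw [if_neg hij, hα]
    rcases hz j with h|h
    · rw [if_neg (by rw [h]; norm_num)]
      have : ∑ i' ∈ Finset.univ.erase j, βbar i' j * X k i' = 0 :=
        Finset.sum_eq_zero fun i' _ => by rw [hβbar0 j h i', zero_mul]
      rw [this, sub_zero]
    · rw [if_pos h]
  -- bounded below by 0
  have hbdd : ∀ y : Fin p → ℝ, BddBelow {c : ℝ | ∃ β W q : Matrix (Fin p) (Fin p) ℝ,
      (∀ i j, 0 ≤ q i j) ∧ (∀ i j, (β i j) ^ 2 ≤ q i j * y j) ∧
      (∀ i j, |β i j| ≤ M * W i j) ∧ (∀ i j, W i j ≤ y i) ∧ (∀ i j, W i j ≤ y j) ∧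
      (∀ i, β i i = 0) ∧
      c = (1 / 2) * (∑ j, ∑ k, (X k j - ∑ i ∈ Finset.univ.erase j, β i j * X k i) ^ 2)
          + lam * ∑ j, ∑ i ∈ Finset.univ.erase j, q i j} := by
    intro y
    refine ⟨0, ?_⟩
    rintro c ⟨β, W, q, hq0, -, -, -, -, -, rfl⟩
    have h1 : (0:ℝ) ≤ ∑ j, ∑ k, (X k j - ∑ i ∈ Finset.univ.erase j, β i j * X k i) ^ 2 :=
      Finset.sum_nonneg fun j _ => Finset.sum_nonneg fun k _ => sq_nonneg _
    have h2 : (0:ℝ) ≤ ∑ j, ∑ i ∈ Finset.univ.erase j, q i j :=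
      Finset.sum_nonneg fun j _ => Finset.sum_nonneg fun i _ => hq0 i j
    have := mul_nonneg hlam h2
    linarith
  set Cz := ∑ j, colObj X lam j (fun i => βbar i j) with hCz
  -- Step A : F1 z ≤ Cz
  have hFz : F1 X lam M z ≤ Cz := by
    unfold F1
    apply csInf_le (hbdd z)
    refine ⟨βbar, fun i j => |βbar i j| / M, fun i j => (βbar i j)^2, ?_, ?_, ?_, ?_, ?_, ?_, ?_⟩
    · exact fun i j => sq_nonneg _
    · intro i j
      rcases hz j with h|h
      · rw [hβbar0 j h i, h]; norm_num
      · rw [h, mul_one]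
    · intro i j
      rw [mul_div_cancel₀ _ (ne_of_gt hM)]
    · intro i j
      rw [div_le_iff₀ hM]
      rcases hz j with h|h
      · rw [hβbar0 j h i]; simp; exact mul_nonneg (hz0 i) hM.le
      · have := (hβbar1 j h).2.1 i; linarith [this]
    · intro i j
      rw [div_le_iff₀ hM]
      rcases hz j with h|h
      · rw [hβbar0 j h i]; simp; exact mul_nonneg (hz0 j) hM.le
      · have h1 := (hβbar1 j h).2.1 i
        have h2 : M * z i ≤ M * 1 := mul_le_mul_of_nonneg_left (hz1 i) hM.le
        rw [h]; nlinarith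
    · exact hβbdiag
    · rw [hCz]
      unfold colObj
      rw [Finset.sum_add_distrib, ← Finset.mul_sum, ← Finset.mul_sum]
  -- Step B : the main bound
  have hmain : ∀ c ∈ {c : ℝ | ∃ β W q : Matrix (Fin p) (Fin p) ℝ,
      (∀ i j, 0 ≤ q i j) ∧ (∀ i j, (β i j) ^ 2 ≤ q i j * x j) ∧
      (∀ i j, |β i j| ≤ M * W i j) ∧ (∀ i j, W i j ≤ x i) ∧ (∀ i j, W i j ≤ x j) ∧
      (∀ i, β i i = 0) ∧
      c = (1 / 2) * (∑ j, ∑ k, (X k j - ∑ i ∈ Finset.univ.erase j, β i j * X k i) ^ 2)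
          + lam * ∑ j, ∑ i ∈ Finset.univ.erase j, q i j},
      F1 X lam M z + ∑ i, g i * (x i - z i) ≤ c := by
    rintro c ⟨β, W, q, hq0, hqz, hβW, hWi, hWj, hβdiag, rfl⟩
    have hβx1 : ∀ i j, |β i j| ≤ M * x i := fun i j =>
      (hβW i j).trans (mul_le_mul_of_nonneg_left (hWi i j) hM.le)
    have hβx2 : ∀ i j, |β i j| ≤ M * x j := fun i j =>
      (hβW i j).trans (mul_le_mul_of_nonneg_left (hWj i j) hM.le)
    -- key pairwise inequality
    have key : ∀ i j, (XtA i j - 2*lam*βbar i j) * (β i j - βbar i j)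
        ≤ Γ1 i j * (x i - z i) + Γ2 i j * (x j - z j) := by
      intro i j
      by_cases hij : i = j
      · subst hij
        have e1 : Γ1 i i = 0 := by
          rw [hΓ1, hXtAdiag, hβbdiag]; split_ifs <;> simp
        have e2 : Γ2 i i = 0 := by
          rw [hΓ2, hXtAdiag, hβbdiag]; split_ifs <;> simp
        rw [e1, e2, hβdiag i, hβbdiag i, hXtAdiag i]
        norm_num
      · have hdb : (XtA i j) * (β i j) ≤ |XtA i j| * |β i j| := by
          rw [← abs_mul]; exact le_abs_self _
        have habs1 := hβx1 i j
        have habs2 := hβx2 i j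
        have hXa := abs_nonneg (XtA i j)
        rcases hz i with hzi|hzi <;> rcases hz j with hzj|hzj
        · -- z i = 0, z j = 0
          have hb0 : βbar i j = 0 := hβbar0 j hzj i
          rw [hΓ1, hΓ2, hb0, hzi, hzj]
          norm_num
          nlinarith [hdb, mul_le_mul_of_nonneg_left habs1 hXa,
            mul_le_mul_of_nonneg_left habs2 hXa]
        · -- z i = 0, z j = 1
          have hb0 : βbar i j = 0 := hβb0r i j hzi
          rw [hΓ1, hΓ2, hb0, hzi, hzj]
          norm_num
          nlinarith [hdb, mul_le_mul_of_nonneg_left habs1 hXa]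
        · -- z i = 1, z j = 0
          have hb0 : βbar i j = 0 := hβbar0 j hzj i
          rw [hΓ1, hΓ2, hb0, hzi, hzj]
          norm_num
          nlinarith [hdb, mul_le_mul_of_nonneg_left habs2 hXa]
        · -- z i = 1, z j = 1
          obtain ⟨hdiagj, hbnd, hmin⟩ := hβbar1 j hzj
          set d := XtA i j - 2*lam*βbar i j with hd
          clear_value d
          have hdabs : M * |d| ≤ d * βbar i j := by
            rcases le_or_gt 0 d with hd0|hd0
            · have hVI := VI X lam M hlam z j i hij (fun i' => βbar i' j) hdiagj hbnd hmin
                M (by rw [hzi, mul_one, abs_of_pos hM])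
              rw [hS i j hij] at hVI
              have hVI' : (XtA i j - 2*lam*βbar i j) * (M - βbar i j) ≤ 0 := by
                simpa using hVI
              rw [abs_of_nonneg hd0]
              rw [← hd] at hVI'
              nlinarith [hVI']
            · have hVI := VI X lam M hlam z j i hij (fun i' => βbar i' j) hdiagj hbnd hmin
                (-M) (by rw [hzi, mul_one, abs_neg, abs_of_pos hM])
              rw [hS i j hij] at hVI
              have hVI' : (XtA i j - 2*lam*βbar i j) * (-M - βbar i j) ≤ 0 := by
                simpa using hVI
              rw [abs_of_neg hd0]
              rw [← hd] at hVI'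
              nlinarith [hVI']
          rw [hΓ1, hΓ2, hzi, hzj]
          norm_num
          rw [← hd]
          have hdb' : d * β i j ≤ |d| * |β i j| := by rw [← abs_mul]; exact le_abs_self _
          have hda := abs_nonneg d
          have h1 : |d| * |β i j| ≤ |d| * (M * ((x i + x j)/2)) :=
            mul_le_mul_of_nonneg_left (by linarith) hda
          nlinarith [hdb', hdabs, h1]
    -- per column bound
    have hcol : ∀ j, colObj X lam j (fun i => βbar i j)
        - ∑ i ∈ Finset.univ.erase j, ((XtA i j - 2*lam*βbar i j) * (β i j - βbar i j)
            + lam*(βbar i j)^2*(x j - z j))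
        ≤ (1/2) * (∑ k, (X k j - ∑ i ∈ Finset.univ.erase j, β i j * X k i)^2)
            + lam * ∑ i ∈ Finset.univ.erase j, q i j := by
      intro j
      have hql := quad_lb X j (fun i => β i j) (fun i => βbar i j)
      have hql' : (1/2) * (∑ k, (X k j - ∑ i ∈ Finset.univ.erase j, βbar i j * X k i)^2)
          - ∑ i ∈ Finset.univ.erase j, (β i j - βbar i j) * XtA i j
          ≤ (1/2) * (∑ k, (X k j - ∑ i ∈ Finset.univ.erase j, β i j * X k i)^2) := by
        have : ∑ i ∈ Finset.univ.erase j, (β i j - βbar i j) * XtA i j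
            = ∑ i ∈ Finset.univ.erase j, (β i j - βbar i j) *
                (∑ k, X k i * (X k j - ∑ i' ∈ Finset.univ.erase j, βbar i' j * X k i')) := by
          refine Finset.sum_congr rfl fun i hi => ?_
          rw [hS i j (Finset.mem_erase.1 hi).1]
        rw [this]; exact hql
      have hps : ∑ i ∈ Finset.univ.erase j,
          (lam*(βbar i j)^2 + 2*lam*(βbar i j)*(β i j - βbar i j)
            - lam*(βbar i j)^2*(x j - z j))
          ≤ lam * ∑ i ∈ Finset.univ.erase j, q i j := by
        rw [Finset.mul_sum]
        refine Finset.sum_le_sum fun i _ => ?_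
        exact persp lam (q i j) (x j) (z j) (β i j) (βbar i j) hlam (hq0 i j) (hqz i j)
          (hx0 j) (hz j) (fun h => hβbar0 j h i)
      have hsplit : ∑ i ∈ Finset.univ.erase j, ((XtA i j - 2*lam*βbar i j) * (β i j - βbar i j)
            + lam*(βbar i j)^2*(x j - z j))
          = (∑ i ∈ Finset.univ.erase j, (β i j - βbar i j) * XtA i j)
            - ∑ i ∈ Finset.univ.erase j, (2*lam*(βbar i j)*(β i j - βbar i j)
                - lam*(βbar i j)^2*(x j - z j)) := by
        rw [← Finset.sum_sub_distrib]
        exact Finset.sum_congr rfl fun i _ => by ring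
      have hsplit2 : ∑ i ∈ Finset.univ.erase j,
          (lam*(βbar i j)^2 + 2*lam*(βbar i j)*(β i j - βbar i j)
            - lam*(βbar i j)^2*(x j - z j))
          = (lam * ∑ i ∈ Finset.univ.erase j, (βbar i j)^2)
            + ∑ i ∈ Finset.univ.erase j, (2*lam*(βbar i j)*(β i j - βbar i j)
                - lam*(βbar i j)^2*(x j - z j)) := by
        rw [Finset.mul_sum, ← Finset.sum_add_distrib]
        exact Finset.sum_congr rfl fun i _ => by ring
      unfold colObj
      rw [hsplit]
      rw [hsplit2] at hps
      linarith
    -- sum over columns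
    have hsumcol : Cz - ∑ j, ∑ i ∈ Finset.univ.erase j,
          ((XtA i j - 2*lam*βbar i j) * (β i j - βbar i j) + lam*(βbar i j)^2*(x j - z j))
        ≤ (1 / 2) * (∑ j, ∑ k, (X k j - ∑ i ∈ Finset.univ.erase j, β i j * X k i) ^ 2)
          + lam * ∑ j, ∑ i ∈ Finset.univ.erase j, q i j := by
      have := Finset.sum_le_sum (fun j (_ : j ∈ Finset.univ) => hcol j)
      rw [Finset.sum_sub_distrib, Finset.sum_add_distrib, ← Finset.mul_sum, ← Finset.mul_sum]
        at this
      rw [hCz]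
      exact this
    -- extend inner sums to full
    have hfull : ∀ j, ∑ i ∈ Finset.univ.erase j,
          ((XtA i j - 2*lam*βbar i j) * (β i j - βbar i j) + lam*(βbar i j)^2*(x j - z j))
        = ∑ i, ((XtA i j - 2*lam*βbar i j) * (β i j - βbar i j)
            + lam*(βbar i j)^2*(x j - z j)) := by
      intro j
      apply Finset.sum_erase
      rw [hβdiag j, hβbdiag j]
      ring
    -- bound T by U
    have hTU : ∑ j, ∑ i, ((XtA i j - 2*lam*βbar i j) * (β i j - βbar i j)
          + lam*(βbar i j)^2*(x j - z j))
        ≤ ∑ j, ∑ i, (Γ1 i j * (x i - z i) + Γ2 i j * (x j - z j)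
          + lam*(βbar i j)^2*(x j - z j)) := by
      refine Finset.sum_le_sum fun j _ => Finset.sum_le_sum fun i _ => ?_
      have := key i j
      linarith
    -- g sum identity
    have hgsum : ∑ i, g i * (x i - z i)
        = -∑ j, ∑ i, (Γ1 i j * (x i - z i) + Γ2 i j * (x j - z j)
            + lam*(βbar i j)^2*(x j - z j)) := by
      have e1 : ∀ i, g i * (x i - z i)
          = -∑ j, (Γ1 i j * (x i - z i) + Γ2 j i * (x i - z i)
              + lam*(βbar j i)^2*(x i - z i)) := by
        intro i
        rw [hg i, neg_mul, Finset.sum_mul, neg_inj]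
        exact Finset.sum_congr rfl fun j _ => by ring
      simp_rw [e1]
      rw [Finset.sum_neg_distrib, neg_inj]
      simp only [Finset.sum_add_distrib]
      congr 1
      congr 1
      exact Finset.sum_comm
    have hfull' : ∑ j, ∑ i ∈ Finset.univ.erase j,
          ((XtA i j - 2*lam*βbar i j) * (β i j - βbar i j) + lam*(βbar i j)^2*(x j - z j))
        = ∑ j, ∑ i, ((XtA i j - 2*lam*βbar i j) * (β i j - βbar i j)
            + lam*(βbar i j)^2*(x j - z j)) :=
      Finset.sum_congr rfl fun j _ => hfull j
    rw [hfull'] at hsumcol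
    linarith [hFz, hsumcol, hTU, hgsum]
  have hne : Set.Nonempty {c : ℝ | ∃ β W q : Matrix (Fin p) (Fin p) ℝ,
      (∀ i j, 0 ≤ q i j) ∧ (∀ i j, (β i j) ^ 2 ≤ q i j * x j) ∧
      (∀ i j, |β i j| ≤ M * W i j) ∧ (∀ i j, W i j ≤ x i) ∧ (∀ i j, W i j ≤ x j) ∧
      (∀ i, β i i = 0) ∧
      c = (1 / 2) * (∑ j, ∑ k, (X k j - ∑ i ∈ Finset.univ.erase j, β i j * X k i) ^ 2)
          + lam * ∑ j, ∑ i ∈ Finset.univ.erase j, q i j} := by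
    refine ⟨_, 0, 0, 0, ?_, ?_, ?_, ?_, ?_, ?_, rfl⟩
    · intro i j; simp
    · intro i j; simp
    · intro i j; simp
    · intro i j; simpa using hx0 i
    · intro i j; simpa using hx0 j
    · intro i; simp
  have := le_csInf hne hmain
  exact this


end
end
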